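/- Let G be a finite group acting on a monoidal category C by monoidal autoequivalences (F_g, ξ^g). Then the crossed product category C ⋊ G = ⊕_{g ∈ G} C_g with tensor product [X, g] ⊗ [Y, h] = [X ⊗ F_g(Y), gh] acts on C by [X, g] ▷ Y = X ⊗ F_g(Y), and this defines a left (C ⋊ G)-module category structure on C: there exist associativity isomorphisms ([X,g] ⊗ [Y,h]) ▷ Z → [X,g] ▷ ([Y,h] ▷ Z) built from ξ^g and the associator of C, satisfying the module category pentagon axiom. -/

import Mathlib

open CategoryTheory MonoidalCategory Functor.LaxMonoidal

variable {C : Type*} [Category C] [MonoidalCategory C]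
variable {G : Type*} [Group G]

/-- The module associativity constraint of the action of the crossed product `C ⋊ G` on `C`,
`([X,g] ⊗ [Y,h]) ▷ A = (X ⊗ F_g(Y)) ⊗ F_{gh}(A) ≅ X ⊗ F_g(Y ⊗ F_h(A)) = [X,g] ▷ ([Y,h] ▷ A)`,
built from the associator of `C`, the monoidal structure `ξ^g` of `F_g` and the
composition isomorphism `μ₂_{g,h} : F_g ∘ F_h ≅ F_{gh}` of the `G`-action. -/
noncomputable def crossedAssoc (F : G → C ⥤ C) [∀ g, (F g).Monoidal]
    (μ₂ : ∀ (g h : G) (Z : C), (F g).obj ((F h).obj Z) ≅ (F (g * h)).obj Z)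
    (X : C) (g : G) (Y : C) (h : G) (A : C) :
    (X ⊗ (F g).obj Y) ⊗ (F (g * h)).obj A ≅ X ⊗ (F g).obj (Y ⊗ (F h).obj A) :=
  α_ X ((F g).obj Y) ((F (g * h)).obj A) ≪≫
    whiskerLeftIso X
      ((whiskerLeftIso ((F g).obj Y) (μ₂ g h A).symm) ≪≫
        asIso (μ (F g) Y ((F h).obj A)))

theorem key (F : G → C ⥤ C) [∀ g, (F g).Monoidal]
    (μ₂ : ∀ (g h : G) (Z : C), (F g).obj ((F h).obj Z) ≅ (F (g * h)).obj Z)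
    (hμmon : ∀ (g h : G) (Y Z : C),
      μ (F g) ((F h).obj Y) ((F h).obj Z) ≫ (F g).map (μ (F h) Y Z) ≫
          (μ₂ g h (Y ⊗ Z)).hom =
        ((μ₂ g h Y).hom ⊗ₘ (μ₂ g h Z).hom) ≫ μ (F (g * h)) Y Z)
    (hcocycle : ∀ (g h l : G) (Z : C),
      (F g).map (μ₂ h l Z).hom ≫ (μ₂ g (h * l) Z).hom =
        (μ₂ g h ((F l).obj Z)).hom ≫ (μ₂ (g * h) l Z).hom ≫
          eqToHom (by rw [mul_assoc]))
    (Y Z A : C) (g h l : G) :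
    (α_ ((F g).obj Y) ((F (g*h)).obj Z) ((F (g*h*l)).obj A)).hom ≫
      ((F g).obj Y ◁ ((F (g*h)).obj Z ◁ (μ₂ (g*h) l A).inv ≫
        μ (F (g*h)) Z ((F l).obj A) ≫ (μ₂ g h (Z ⊗ (F l).obj A)).inv)) ≫
      μ (F g) Y ((F h).obj (Z ⊗ (F l).obj A))
    = ((((F g).obj Y ◁ (μ₂ g h Z).inv) ≫ μ (F g) Y ((F h).obj Z)) ⊗ₘ
        (eqToHom (by rw [mul_assoc]) : (F (g*h*l)).obj A ⟶ (F (g*(h*l))).obj A)) ≫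
      ((F g).obj (Y ⊗ (F h).obj Z) ◁ (μ₂ g (h*l) A).inv) ≫
      μ (F g) (Y ⊗ (F h).obj Z) ((F (h*l)).obj A) ≫
      (F g).map ((α_ Y ((F h).obj Z) ((F (h*l)).obj A)).hom ≫
        (Y ◁ ((F h).obj Z ◁ (μ₂ h l A).inv ≫ μ (F h) Z ((F l).obj A)))) := by
  have hc2 : (eqToHom (by rw [mul_assoc]) : (F (g*h*l)).obj A ⟶ (F (g*(h*l))).obj A) ≫
      (μ₂ g (h*l) A).inv =
      (μ₂ (g*h) l A).inv ≫ (μ₂ g h ((F l).obj A)).inv ≫ (F g).map (μ₂ h l A).hom := by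
    have h1 := hcocycle g h l A
    calc (eqToHom (by rw [mul_assoc]) : (F (g*h*l)).obj A ⟶ (F (g*(h*l))).obj A) ≫
        (μ₂ g (h*l) A).inv
        = (μ₂ (g*h) l A).inv ≫ (μ₂ g h ((F l).obj A)).inv ≫
            ((μ₂ g h ((F l).obj A)).hom ≫ (μ₂ (g*h) l A).hom ≫
              eqToHom (by rw [mul_assoc])) ≫ (μ₂ g (h*l) A).inv := by simp
      _ = (μ₂ (g*h) l A).inv ≫ (μ₂ g h ((F l).obj A)).inv ≫
            ((F g).map (μ₂ h l A).hom ≫ (μ₂ g (h*l) A).hom) ≫ (μ₂ g (h*l) A).inv := by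
          rw [h1]
      _ = _ := by simp
  have mon' : μ (F g) ((F h).obj Z) ((F h).obj ((F l).obj A)) ≫
      (F g).map (μ (F h) Z ((F l).obj A)) =
      ((μ₂ g h Z).hom ⊗ₘ (μ₂ g h ((F l).obj A)).hom) ≫ μ (F (g*h)) Z ((F l).obj A) ≫
        (μ₂ g h (Z ⊗ (F l).obj A)).inv := by
    rw [eq_comm, ← Category.assoc, ← hμmon g h Z ((F l).obj A)]; simp
  conv_rhs => rw [MonoidalCategory.tensorHom_def, Category.assoc, ← MonoidalCategory.whiskerLeft_comp_assoc, hc2]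
  simp only [MonoidalCategory.whiskerLeft_comp, Category.assoc, comp_whiskerRight,
    Functor.LaxMonoidal.μ_natural_right, Functor.LaxMonoidal.μ_natural_right_assoc]
  have inner : (F g).map ((Y ⊗ (F h).obj Z) ◁ (μ₂ h l A).hom) ≫
      (F g).map ((α_ Y ((F h).obj Z) ((F (h * l)).obj A)).hom ≫
        Y ◁ (F h).obj Z ◁ (μ₂ h l A).inv ≫ Y ◁ μ (F h) Z ((F l).obj A)) =
      (F g).map ((α_ Y ((F h).obj Z) ((F h).obj ((F l).obj A))).hom ≫
        Y ◁ μ (F h) Z ((F l).obj A)) := by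
    rw [← Functor.map_comp]
    congr 1
    rw [associator_naturality_right_assoc]
    simp [← MonoidalCategory.whiskerLeft_comp_assoc]
  rw [inner]
  conv_rhs => rw [Functor.map_comp, ← whisker_exchange_assoc, ← whisker_exchange_assoc,
    ← whisker_exchange_assoc, ← whisker_exchange_assoc,
    Functor.LaxMonoidal.associativity_assoc, ← Functor.LaxMonoidal.μ_natural_right,
    ← MonoidalCategory.whiskerLeft_comp_assoc ((F g).obj Y), mon']
  simp [MonoidalCategory.tensorHom_def, whisker_exchange_assoc,
    associator_naturality_right_assoc, associator_naturality_middle_assoc]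


/-- Let `G` be a finite group acting on a monoidal category `C` by monoidal
autoequivalences `(F_g, ξ^g)` (with composition isomorphisms `μ₂_{g,h} : F_g ∘ F_h ≅ F_{gh}`
that are natural, monoidal, and satisfy the cocycle coherence).  Then the crossed product
`C ⋊ G` (objects `[X, g]`, tensor `[X,g] ⊗ [Y,h] = [X ⊗ F_g(Y), gh]`) acts on `C` by
`[X,g] ▷ A = X ⊗ F_g(A)`, and this is a left module category structure: the associativity
isomorphisms `crossedAssoc`, built from `ξ^g` and the associator of `C`, satisfy the module
category pentagon axiom (the associator of `C ⋊ G` has as its `C`-component the same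
composite, together with the identification `F_{(gh)l} = F_{g(hl)}`). -/
theorem crossed_product_module_pentagon [Finite G]
    (F : G → C ⥤ C) [∀ g, (F g).Monoidal] [∀ g, (F g).IsEquivalence]
    (μ₂ : ∀ (g h : G) (Z : C), (F g).obj ((F h).obj Z) ≅ (F (g * h)).obj Z)
    (hμnat : ∀ (g h : G) {Z Z' : C} (f : Z ⟶ Z'),
      (F g).map ((F h).map f) ≫ (μ₂ g h Z').hom = (μ₂ g h Z).hom ≫ (F (g * h)).map f)
    (hμmon : ∀ (g h : G) (Y Z : C),
      μ (F g) ((F h).obj Y) ((F h).obj Z) ≫ (F g).map (μ (F h) Y Z) ≫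
          (μ₂ g h (Y ⊗ Z)).hom =
        ((μ₂ g h Y).hom ⊗ₘ (μ₂ g h Z).hom) ≫ μ (F (g * h)) Y Z)
    (hcocycle : ∀ (g h l : G) (Z : C),
      (F g).map (μ₂ h l Z).hom ≫ (μ₂ g (h * l) Z).hom =
        (μ₂ g h ((F l).obj Z)).hom ≫ (μ₂ (g * h) l Z).hom ≫
          eqToHom (by rw [mul_assoc]))
    (X Y Z A : C) (g h l : G) :
    (crossedAssoc F μ₂ (X ⊗ (F g).obj Y) (g * h) Z l A).hom ≫
        (crossedAssoc F μ₂ X g Y h (Z ⊗ (F l).obj A)).hom =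
      ((crossedAssoc F μ₂ X g Y h Z).hom ⊗ₘ
          (eqToHom (by rw [mul_assoc]) : (F (g * h * l)).obj A ⟶ (F (g * (h * l))).obj A)) ≫
        (crossedAssoc F μ₂ X g (Y ⊗ (F h).obj Z) (h * l) A).hom ≫
        (X ◁ (F g).map (crossedAssoc F μ₂ Y h Z l A).hom) := by
  have k := key F μ₂ hμmon hcocycle Y Z A g h l
  trans ((α_ X ((F g).obj Y) ((F (g*h)).obj Z)).hom ▷ (F (g*h*l)).obj A ≫
      (α_ X ((F g).obj Y ⊗ (F (g*h)).obj Z) ((F (g*h*l)).obj A)).hom ≫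
      X ◁ ((α_ ((F g).obj Y) ((F (g*h)).obj Z) ((F (g*h*l)).obj A)).hom ≫
        ((F g).obj Y ◁ ((F (g*h)).obj Z ◁ (μ₂ (g*h) l A).inv ≫
          μ (F (g*h)) Z ((F l).obj A) ≫ (μ₂ g h (Z ⊗ (F l).obj A)).inv)) ≫
        μ (F g) Y ((F h).obj (Z ⊗ (F l).obj A))))
  · simp only [crossedAssoc, Iso.trans_hom, whiskerLeftIso_hom, Iso.symm_hom, asIso_hom,
      MonoidalCategory.whiskerLeft_comp, Category.assoc]
    rw [associator_naturality_right_assoc, associator_naturality_right_assoc, ← pentagon_assoc]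
  · rw [k]
    simp only [crossedAssoc, Iso.trans_hom, whiskerLeftIso_hom, Iso.symm_hom, asIso_hom,
      MonoidalCategory.tensorHom_def, MonoidalCategory.whiskerLeft_comp, comp_whiskerRight, Category.assoc]
    rw [associator_naturality_right_assoc, associator_naturality_middle_assoc,
      associator_naturality_middle_assoc]
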